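/- arXiv:2008.08740 — 2 statements merged into one kernel-verified Lean document; each statement's English description precedes it below -/
import Mathlib

section
/- Let χ be a chi-squared random variable with d degrees of freedom. Then for all x > 1, P[χ ≤ d/x] ≤ exp(-(d/2)(ln x + 1/x - 1)). -/
open MeasureTheory ProbabilityTheory Real

/-- The chi-squared distribution with `d` degrees of freedom, as a Gamma
distribution with shape `d/2` and rate `1/2`. -/
noncomputable def chiSqMeasure (d : ℕ) : Measure ℝ :=
  gammaMeasure ((d : ℝ) / 2) (1 / 2)

/-- Lower-tail bound for chi-squared: if `χ ~ χ²(d)`, then for all `x > 1`,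
`P[χ ≤ d/x] ≤ exp(-(d/2)(ln x + 1/x - 1))`. -/
theorem stmt3 (d : ℕ) (hd : 0 < d) (x : ℝ) (hx : 1 < x) :
    chiSqMeasure d {y : ℝ | y ≤ (d : ℝ) / x}
      ≤ ENNReal.ofReal (Real.exp (-((d : ℝ) / 2) * (Real.log x + 1 / x - 1))) := by
  have hx0 : (0:ℝ) < x := lt_trans one_pos hx
  have hd' : (0:ℝ) < (d:ℝ) := Nat.cast_pos.mpr hd
  set a : ℝ := (d:ℝ) / 2 with ha_def
  have ha : 0 < a := by positivity
  set t : ℝ := (x - 1) / 2 with ht_def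
  have ht : 0 ≤ t := by unfold t; linarith
  set s : ℝ := (d:ℝ) / x with hs_def
  set C : ℝ := (1/x) ^ a * Real.exp (t * s) with hC_def
  have hC : 0 < C := by
    apply mul_pos _ (Real.exp_pos _)
    exact Real.rpow_pos_of_pos (by positivity) _
  have hΓ : 0 < Real.Gamma a := Real.Gamma_pos_of_pos ha
  -- pointwise bound
  have key : ∀ y ∈ Set.Iic s, gammaPDF a (1/2) y ≤ ENNReal.ofReal C * gammaPDF a (x/2) y := by
    intro y hy
    rcases lt_or_ge y 0 with h0 | h0
    · rw [gammaPDF_of_neg h0]; exact zero_le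
    · rw [gammaPDF_of_nonneg h0, gammaPDF_of_nonneg h0, ← ENNReal.ofReal_mul hC.le]
      apply ENNReal.ofReal_le_ofReal
      have heq : C * ((x/2) ^ a / Real.Gamma a * y ^ (a-1) * Real.exp (-(x/2*y)))
          = ((1/x) ^ a * (x/2) ^ a) / Real.Gamma a * y ^ (a-1)
            * (Real.exp (t*s) * Real.exp (-(x/2*y))) := by
        rw [hC_def]; ring
      rw [heq, ← Real.mul_rpow (by positivity) (by positivity)]
      have hhalf : (1/x) * (x/2) = 1/2 := by field_simp
      rw [hhalf]
      have hy' : y ∈ Set.Iic s := hy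
      refine mul_le_mul_of_nonneg_left ?_ (by positivity)
      rw [← Real.exp_add]
      apply Real.exp_le_exp.mpr
      have hts : t * y ≤ t * s := mul_le_mul_of_nonneg_left hy' ht
      nlinarith [hts]
  have hmeas : Measurable (gammaPDF a (x/2)) :=
    (measurable_gammaPDFReal a (x/2)).ennreal_ofReal
  have hbound : chiSqMeasure d {y : ℝ | y ≤ s} ≤ ENNReal.ofReal C := by
    calc chiSqMeasure d {y : ℝ | y ≤ s}
        = ∫⁻ y in Set.Iic s, gammaPDF a (1/2) y := by
          exact withDensity_apply _ measurableSet_Iic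
      _ ≤ ∫⁻ y in Set.Iic s, ENNReal.ofReal C * gammaPDF a (x/2) y :=
          setLIntegral_mono (by fun_prop) key
      _ = ENNReal.ofReal C * ∫⁻ y in Set.Iic s, gammaPDF a (x/2) y := by
          rw [lintegral_const_mul _ hmeas]
      _ ≤ ENNReal.ofReal C * ∫⁻ y, gammaPDF a (x/2) y := by
          gcongr
          exact Measure.restrict_le_self
      _ = ENNReal.ofReal C := by
          rw [lintegral_gammaPDF_eq_one ha (by positivity), mul_one]
  refine hbound.trans (le_of_eq ?_)
  congr 1
  rw [hC_def, Real.rpow_def_of_pos (by positivity), ← Real.exp_add, one_div,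
    Real.log_inv]
  congr 1
  rw [ht_def, hs_def, ha_def]
  field_simp
  ring
end

section
/- The function f(x) = (1 + c)(1 + x) - sqrt(1 + c(1 + x)) · sqrt(1 + 2x + c(1 + x)) is strictly positive and monotonically increasing in x for all x > 0, for any fixed constant c > 0. -/
open Real

/-- The exponent function `f(x) = (1+c)(1+x) - √(1+c(1+x))·√(1+2x+c(1+x))`
is strictly positive and strictly increasing on `x > 0`, for any fixed `c > 0`. -/
theorem stmt5 (c : ℝ) (hc : 0 < c) :
    (∀ x > 0, 0 < (1 + c) * (1 + x) -
        Real.sqrt (1 + c * (1 + x)) * Real.sqrt (1 + 2*x + c * (1 + x))) ∧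
    StrictMonoOn (fun x : ℝ => (1 + c) * (1 + x) -
        Real.sqrt (1 + c * (1 + x)) * Real.sqrt (1 + 2*x + c * (1 + x)))
      (Set.Ioi 0) := by
  have hA : ∀ x : ℝ, 0 < x → (0:ℝ) ≤ 1 + c * (1 + x) := by intro x hx; nlinarith
  have key : ∀ x : ℝ, 0 < x →
      Real.sqrt (1 + c * (1 + x)) * Real.sqrt (1 + 2*x + c * (1 + x))
        = Real.sqrt ((1 + c * (1 + x)) * (1 + 2*x + c * (1 + x))) := by
    intro x hx; rw [Real.sqrt_mul (hA x hx)]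
  have hQ : ∀ x : ℝ, 0 < x →
      (0:ℝ) ≤ (1 + c * (1 + x)) * (1 + 2*x + c * (1 + x)) := by
    intro x hx
    have h1 : (0:ℝ) < 1 + c * (1 + x) := by nlinarith
    have h2 : (0:ℝ) < 1 + 2*x + c * (1 + x) := by nlinarith
    exact (mul_pos h1 h2).le
  have hpos : ∀ x > (0:ℝ), 0 < (1 + c) * (1 + x) -
      Real.sqrt (1 + c * (1 + x)) * Real.sqrt (1 + 2*x + c * (1 + x)) := by
    intro x hx
    rw [key x hx, sub_pos]
    have hS : (0:ℝ) < (1 + c) * (1 + x) := by nlinarith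
    rw [Real.sqrt_lt' hS]
    nlinarith [sq_nonneg x, hx]
  refine ⟨hpos, ?_⟩
  -- lower bound for sqrt Q
  have hlb : ∀ x : ℝ, 0 < x →
      (1+c)^2*(1+x) - x ≤ (1+c) *
        Real.sqrt ((1 + c * (1 + x)) * (1 + 2*x + c * (1 + x))) := by
    intro x hx
    have hs := Real.sq_sqrt (hQ x hx)
    have h2 : (0:ℝ) ≤ (1+c) *
        Real.sqrt ((1 + c * (1 + x)) * (1 + 2*x + c * (1 + x))) := by positivity
    have h1 : ((1+c)^2*(1+x) - x)^2 ≤ ((1+c) *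
        Real.sqrt ((1 + c * (1 + x)) * (1 + 2*x + c * (1 + x))))^2 := by
      rw [mul_pow, hs]
      nlinarith [hx.le, sq_nonneg x, mul_pos hc hx, mul_pos hx hx]
    exact le_of_pow_le_pow_left₀ two_ne_zero h2 h1
  intro x hx y hy hxy
  simp only [Set.mem_Ioi] at hx hy
  simp only
  rw [key x hx, key y hy]
  set sx := Real.sqrt ((1 + c * (1 + x)) * (1 + 2*x + c * (1 + x))) with hsx
  have hsx0 : 0 ≤ sx := Real.sqrt_nonneg _
  have hsxsq : sx^2 = (1 + c * (1 + x)) * (1 + 2*x + c * (1 + x)) :=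
    Real.sq_sqrt (hQ x hx)
  have hlbx := hlb x hx
  rw [← hsx] at hlbx
  have hrhs : (0:ℝ) < sx + (1+c)*(y-x) := by
    have : (0:ℝ) < (1+c)*(y-x) := by nlinarith
    linarith
  have hsy : Real.sqrt ((1 + c * (1 + y)) * (1 + 2*y + c * (1 + y)))
      < sx + (1+c)*(y-x) := by
    rw [Real.sqrt_lt' hrhs]
    have hxy' : 0 < y - x := by linarith
    nlinarith [mul_le_mul_of_nonneg_left hlbx (le_of_lt hxy'),
      mul_pos hxy' hxy', hsxsq, mul_pos hc hxy', mul_pos hxy' hx]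
  linarith
end
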